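/- Let C ⊆ ℝ^d be a compact set with a system of balls {S_I} such that: each ball has at most N₀ children; for each n ≥ 1 the level-n balls S_I (|I| = n) are pairwise disjoint and all have the same radius r_n (with r₀ := rad(S_∅)); and sup_{n ≥ 0} r_{n+1}/r_n < 1. Then there is M ∈ ℕ, depending only on N₀, the choice of the norm, and d, such that: if τ := τ(C, {S_I}) > 0, then S := C ∪ (ℝ^d ∖ S_∅) is (1/τ, β, 0, β·rad(S_∅), ℋ_M)-winning for every β ∈ [sup_{n ≥ 0} r_{n+1}/r_n, 1). -/

import Mathlib

open Metric Set Filter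
open scoped ENNReal

/-- A system of balls in a normed space: closed balls indexed by finite words of
natural numbers, each ball containing its finitely many (at least one) children,
with radii tending to zero along infinite words. -/
structure BallSystem (E : Type*) [NormedAddCommGroup E] where
  center : List ℕ → E
  radius : List ℕ → ℝ
  numChildren : List ℕ → ℕ
  radius_pos : ∀ I, 0 < radius I
  numChildren_pos : ∀ I, 0 < numChildren I
  child_subset : ∀ I, ∀ i < numChildren I,
    Metric.closedBall (center (I ++ [i])) (radius (I ++ [i])) ⊆
      Metric.closedBall (center I) (radius I)
  radius_tendsto : ∀ ω : ℕ → ℕ,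
    Filter.Tendsto (fun n => radius (List.ofFn fun k : Fin n => ω k)) Filter.atTop (nhds 0)

namespace BallSystem

variable {E : Type*} [NormedAddCommGroup E]

/-- The ball with index `I`. -/
def ball (B : BallSystem E) (I : List ℕ) : Set E :=
  Metric.closedBall (B.center I) (B.radius I)

/-- A word is valid if each letter indexes an actual child of the preceding prefix. -/
def valid (B : BallSystem E) (I : List ℕ) : Prop :=
  ∀ n : Fin I.length, I.get n < B.numChildren (I.take n.1)

/-- `B` is a system of balls for the set `C`: `C = ⋂_n ⋃_{|I| = n} S_I`. -/
def IsSystemFor (B : BallSystem E) (C : Set E) : Prop :=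
  C = ⋂ n : ℕ, ⋃ I ∈ {I : List ℕ | B.valid I ∧ I.length = n}, B.ball I

/-- `h_I := max_{x ∈ S_I} dist (x, C)`. -/
noncomputable def h (B : BallSystem E) (C : Set E) (I : List ℕ) : ℝ :=
  ⨆ x ∈ B.ball I, infDist x C

/-- The minimum of the radii of the children of `S_I`. -/
noncomputable def minChildRadius (B : BallSystem E) (I : List ℕ) : ℝ :=
  ⨅ i : Fin (B.numChildren I), B.radius (I ++ [i.1])

/-- The thickness of `C` associated to the system of balls `B`, with values in `[0, ∞]`
(the ratio `min_i rad S_{I,i} / h_I` being interpreted as `∞` when `h_I = 0`). -/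
noncomputable def thickness (B : BallSystem E) (C : Set E) : ℝ≥0∞ :=
  ⨅ I : {I : List ℕ // B.valid I},
    ENNReal.ofReal (B.minChildRadius I.1) / ENNReal.ofReal (B.h C I.1)

/-- The system is `r`-uniformly dense: every closed ball contained in `S_I` with radius
at least `r · rad S_I` contains a child of `S_I`. -/
def UniformlyDense (B : BallSystem E) (r : ℝ) : Prop :=
  ∀ I, B.valid I → ∀ (x : E) (ρ : ℝ), Metric.closedBall x ρ ⊆ B.ball I →
    r * B.radius I ≤ ρ → ∃ i < B.numChildren I, B.ball (I ++ [i]) ⊆ Metric.closedBall x ρ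

variable {B : BallSystem E}

theorem valid_nil : B.valid [] := fun n => absurd n.2 (by simp)

theorem valid_take {I : List ℕ} (hI : B.valid I) (k : ℕ) : B.valid (I.take k) := by
  intro n
  have hlt : (n : ℕ) < I.length := lt_of_lt_of_le n.2 (by simp)
  have h1 : (I.take k).get n = I.get ⟨n, hlt⟩ := by
    simp [List.get_eq_getElem, List.getElem_take]
  have h2 : (I.take k).take n.1 = I.take n.1 := by
    rw [List.take_take]
    congr 1
    exact Nat.min_eq_left (le_of_lt (lt_of_lt_of_le n.2 (by simp [List.length_take])))
  rw [h1, h2]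
  exact hI ⟨n, hlt⟩

theorem valid_append {I : List ℕ} (hI : B.valid I) {i : ℕ} (hi : i < B.numChildren I) :
    B.valid (I ++ [i]) := by
  intro n
  have hn : (n : ℕ) < I.length + 1 := by simpa using n.2
  rcases lt_or_eq_of_le (Nat.lt_succ_iff.1 hn) with hlt | heq
  · have h1 : (I ++ [i]).get n = I.get ⟨n, hlt⟩ := by
      simp [List.get_eq_getElem, List.getElem_append_left hlt]
    have h2 : (I ++ [i]).take n.1 = I.take n.1 := by
      rw [List.take_append_of_le_length (le_of_lt hlt)]
    rw [h1, h2]; exact hI ⟨n, hlt⟩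
  · have h1 : (I ++ [i]).get n = i := by
      simp [List.get_eq_getElem, heq]
    have h2 : (I ++ [i]).take n.1 = I := by
      rw [heq, List.take_left]
    rw [h1, h2]; exact hi


theorem ball_take_subset {I : List ℕ} (hI : B.valid I) (k : ℕ) :
    B.ball I ⊆ B.ball (I.take k) := by
  induction I using List.reverseRecOn with
  | nil => rw [List.take_nil]
  | append_singleton J i ih =>
    rcases le_or_gt (J.length + 1) k with hk | hk
    · rw [List.take_of_length_le (by simpa using hk)]
    · have hk' : k ≤ J.length := by omega
      have hJ : B.valid J := by
        have := valid_take hI J.length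
        rwa [List.take_left] at this
      have hi : i < B.numChildren J := by
        have := hI ⟨J.length, by simp⟩
        simpa [List.take_left] using this
      calc B.ball (J ++ [i]) ⊆ B.ball J := B.child_subset J i hi
        _ ⊆ B.ball (J.take k) := ih hJ
        _ = B.ball ((J ++ [i]).take k) := by rw [List.take_append_of_le_length hk']

theorem validLevel_finite (B : BallSystem E) (n : ℕ) :
    {I : List ℕ | B.valid I ∧ I.length = n}.Finite := by
  induction n with
  | zero =>
    apply Set.Finite.subset (Set.finite_singleton ([] : List ℕ))
    rintro I ⟨-, hlen⟩
    simp [List.length_eq_zero_iff.1 hlen]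
  | succ n ih =>
    have : {I : List ℕ | B.valid I ∧ I.length = n + 1} ⊆
        ⋃ J ∈ {I : List ℕ | B.valid I ∧ I.length = n},
          (fun i => J ++ [i]) '' (Set.Iio (B.numChildren J)) := by
      rintro I ⟨hv, hlen⟩
      have hIeq : I = I.take n ++ [I.get ⟨n, by omega⟩] := by
        conv_lhs => rw [← List.take_append_drop n I]
        congr 1
        rw [List.drop_eq_getElem_cons (by omega)]
        simp [List.drop_of_length_le, hlen]
      refine Set.mem_biUnion ⟨valid_take hv n, by simp [List.length_take]; omega⟩ ?_
      refine ⟨I.get ⟨n, by omega⟩, ?_, hIeq.symm⟩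
      simpa using hv ⟨n, by omega⟩
    exact Set.Finite.subset (Set.Finite.biUnion ih
      (fun J _ => Set.Finite.image _ (Set.finite_Iio _))) this


theorem valid_replicate (B : BallSystem E) (n : ℕ) : B.valid (List.replicate n 0) := by
  intro k
  have : (List.replicate n 0).get k = 0 := List.getElem_replicate ..
  rw [this]
  exact B.numChildren_pos _

theorem ball_replicate_succ_subset (B : BallSystem E) (n : ℕ) :
    B.ball (List.replicate (n+1) 0) ⊆ B.ball (List.replicate n 0) := by
  rw [List.replicate_succ']
  exact B.child_subset _ 0 (B.numChildren_pos _)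

theorem ball_replicate_subset (B : BallSystem E) {n m : ℕ} (h : n ≤ m) :
    B.ball (List.replicate m 0) ⊆ B.ball (List.replicate n 0) := by
  induction m with
  | zero => simpa [Nat.le_zero.1 h]
  | succ m ih =>
    rcases Nat.lt_or_ge n (m+1) with hlt | hge
    · exact (B.ball_replicate_succ_subset m).trans (ih (by omega))
    · have : n = m + 1 := by omega
      simp [this]

theorem radius_replicate_tendsto (B : BallSystem E) :
    Filter.Tendsto (fun n => B.radius (List.replicate n 0)) Filter.atTop (nhds 0) := by
  have := B.radius_tendsto (fun _ => 0)
  simpa [List.ofFn_const] using this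

theorem nonempty_of_isSystemFor [CompleteSpace E] {B : BallSystem E} {C : Set E}
    (hC : B.IsSystemFor C) : C.Nonempty := by
  set x : ℕ → E := fun n => B.center (List.replicate n 0) with hx
  have hmem : ∀ {n m : ℕ}, n ≤ m → x m ∈ B.ball (List.replicate n 0) := by
    intro n m hnm
    exact B.ball_replicate_subset hnm (mem_closedBall_self (B.radius_pos _).le)
  have hcauchy : CauchySeq x := by
    apply cauchySeq_of_le_tendsto_0 (fun n => 2 * B.radius (List.replicate n 0))
    · intro n m N hn hm
      have h1 := hmem hn
      have h2 := hmem hm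
      rw [BallSystem.ball, Metric.mem_closedBall] at h1 h2
      calc dist (x n) (x m) ≤ dist (x n) (B.center (List.replicate N 0)) +
            dist (B.center (List.replicate N 0)) (x m) := dist_triangle _ _ _
        _ ≤ _ := by rw [two_mul]; exact add_le_add h1 (by rwa [dist_comm] at h2)
    · simpa using (B.radius_replicate_tendsto).const_mul 2
  obtain ⟨y, hy⟩ := cauchySeq_tendsto_of_complete hcauchy
  refine ⟨y, ?_⟩
  rw [hC]
  refine Set.mem_iInter.2 fun n => Set.mem_biUnion ⟨B.valid_replicate n, List.length_replicate⟩ ?_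
  have : ∀ᶠ m in Filter.atTop, x m ∈ B.ball (List.replicate n 0) :=
    Filter.eventually_atTop.2 ⟨n, fun m hm => hmem hm⟩
  exact (Metric.isClosed_closedBall.mem_of_tendsto hy this : _)


theorem infDist_le_h {B : BallSystem E} (C : Set E) {I : List ℕ} {x : E}
    (hx : x ∈ B.ball I) : infDist x C ≤ B.h C I := by
  have hbdd : BddAbove (Set.range fun y => ⨆ _ : y ∈ B.ball I, infDist y C) := by
    refine ⟨max 0 (infDist (B.center I) C + B.radius I), ?_⟩
    rintro _ ⟨y, rfl⟩
    show (⨆ _ : y ∈ B.ball I, infDist y C) ≤ max 0 (infDist (B.center I) C + B.radius I)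
    by_cases hy : y ∈ B.ball I
    · haveI : Nonempty (y ∈ B.ball I) := ⟨hy⟩
      rw [ciSup_const]
      refine le_max_of_le_right ?_
      calc infDist y C ≤ infDist (B.center I) C + dist y (B.center I) :=
            Metric.infDist_le_infDist_add_dist
        _ ≤ _ := by
            have : dist y (B.center I) ≤ B.radius I := Metric.mem_closedBall.1 hy
            linarith
    · haveI : IsEmpty (y ∈ B.ball I) := ⟨hy⟩
      rw [Real.iSup_of_isEmpty]
      exact le_max_left _ _
  have h1 : (⨆ _ : x ∈ B.ball I, infDist x C) ≤ B.h C I := le_ciSup hbdd x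
  haveI : Nonempty (x ∈ B.ball I) := ⟨hx⟩
  rwa [ciSup_const] at h1

theorem h_nonneg {B : BallSystem E} (C : Set E) (I : List ℕ) : 0 ≤ B.h C I :=
  le_trans Metric.infDist_nonneg (infDist_le_h C (mem_closedBall_self (B.radius_pos I).le))


theorem ofReal_h_mul_thickness_le {B : BallSystem E} {C : Set E} {I : List ℕ}
    (hI : B.valid I) :
    ENNReal.ofReal (B.h C I) * B.thickness C ≤ ENNReal.ofReal (B.minChildRadius I) := by
  have h1 : B.thickness C ≤
      ENNReal.ofReal (B.minChildRadius I) / ENNReal.ofReal (B.h C I) :=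
    iInf_le _ (⟨I, hI⟩ : {I : List ℕ // B.valid I})
  rcases eq_or_ne (ENNReal.ofReal (B.h C I)) 0 with h0 | h0
  · simp [h0]
  · rw [mul_comm]
    exact (ENNReal.le_div_iff_mul_le (Or.inl h0) (Or.inl ENNReal.ofReal_ne_top)).1 h1

theorem minChildRadius_eq {B : BallSystem E} {I : List ℕ} (hI : B.valid I)
    {r : ℕ → ℝ} (hr : ∀ J, B.valid J → B.radius J = r J.length) :
    B.minChildRadius I = r (I.length + 1) := by
  have hconst : ∀ i : Fin (B.numChildren I), B.radius (I ++ [i.1]) = r (I.length + 1) := by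
    intro i
    rw [hr _ (valid_append hI i.2)]
    simp
  haveI : Nonempty (Fin (B.numChildren I)) := ⟨⟨0, B.numChildren_pos I⟩⟩
  rw [BallSystem.minChildRadius]
  simp only [hconst]
  exact ciInf_const

end BallSystem

section Aux
variable {E : Type*} [NormedAddCommGroup E] [NormedSpace ℝ E]

/-- Crossing a sphere: if `z` is outside a closed ball and `p` inside, some point of the
sphere is within `dist z p` of `z`. -/
theorem exists_sphere_dist_le {z p c : E} {R : ℝ} (hz : z ∉ Metric.closedBall c R)
    (hp : p ∈ Metric.closedBall c R) :
    ∃ w ∈ Metric.sphere c R, dist z w ≤ dist z p := by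
  have hf : ContinuousOn (fun t : ℝ => dist (z + t • (p - z)) c) (Set.Icc 0 1) := by
    fun_prop
  have h0 : dist (z + (0:ℝ) • (p - z)) c = dist z c := by simp
  have h1 : dist (z + (1:ℝ) • (p - z)) c = dist p c := by simp
  have hmem : R ∈ Set.Icc (dist (z + (1:ℝ) • (p - z)) c) (dist (z + (0:ℝ) • (p - z)) c) := by
    rw [h0, h1]
    exact ⟨Metric.mem_closedBall.1 hp, le_of_lt (by simpa [Metric.mem_closedBall] using hz)⟩
  obtain ⟨t, ht, hteq⟩ := intermediate_value_Icc' (by norm_num : (0:ℝ) ≤ 1) hf hmem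
  refine ⟨z + t • (p - z), by simpa [Metric.mem_sphere, dist_eq_norm] using hteq, ?_⟩
  have : dist z (z + t • (p - z)) = |t| * ‖p - z‖ := by
    rw [dist_eq_norm]
    simp [norm_smul, abs_of_nonneg, ht.1]
  rw [this, dist_eq_norm]
  calc |t| * ‖p - z‖ ≤ 1 * ‖p - z‖ := by
        apply mul_le_mul_of_nonneg_right _ (norm_nonneg _)
        rw [abs_of_nonneg ht.1]; exact ht.2
    _ = ‖p - z‖ := one_mul _
    _ = ‖z - p‖ := norm_sub_rev _ _

/-- In a nontrivial normed space, inclusion of closed balls forces inequality of radii. -/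
theorem radius_le_of_closedBall_subset [Nontrivial E] {c c' : E} {R R' : ℝ} (hR' : 0 ≤ R')
    (h : Metric.closedBall c' R' ⊆ Metric.closedBall c R) : R' ≤ R := by
  obtain ⟨v, hv⟩ := exists_ne (0 : E)
  set w : E := (R' / ‖v‖) • v with hw
  have hnw : ‖w‖ = R' := by
    rw [hw, norm_smul, norm_div, Real.norm_eq_abs, abs_of_nonneg hR']
    field_simp [norm_ne_zero_iff.2 hv]
    rw [norm_norm]
  have h1 : c' + w ∈ Metric.closedBall c R := h (by simp [Metric.mem_closedBall, dist_eq_norm, hnw])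
  have h2 : c' - w ∈ Metric.closedBall c R := h (by simp [Metric.mem_closedBall, dist_eq_norm, hnw])
  rw [Metric.mem_closedBall, dist_eq_norm] at h1 h2
  have : 2 * R' = ‖(c' + w) - (c' - w)‖ := by
    rw [show (c' + w) - (c' - w) = w + w by abel, ← two_smul ℝ w, norm_smul]
    simp [hnw]
  have htri : ‖(c' + w) - (c' - w)‖ ≤ 2 * R := by
    calc ‖(c' + w) - (c' - w)‖ = ‖((c' + w) - c) - ((c' - w) - c)‖ := by abel_nf
      _ ≤ ‖(c' + w) - c‖ + ‖(c' - w) - c‖ := norm_sub_le _ _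
      _ ≤ R + R := add_le_add h1 h2
      _ = 2 * R := (two_mul R).symm
  linarith [this ▸ htri]

/-- Packing: disjoint closed balls of radius `R` inside a ball of radius `4R` number at
most `4 ^ dim`. -/
theorem card_le_of_disjoint_balls {E : Type*} [NormedAddCommGroup E] [NormedSpace ℝ E]
    [FiniteDimensional ℝ E] {ι : Type*} [DecidableEq ι] (P : Finset ι)
    (c : ι → E) {R : ℝ} (hR : 0 < R) (x : E)
    (hdisj : (↑P : Set ι).PairwiseDisjoint fun i => Metric.closedBall (c i) R)
    (hsub : ∀ i ∈ P, Metric.closedBall (c i) R ⊆ Metric.closedBall x (4 * R)) :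
    P.card ≤ 4 ^ Module.finrank ℝ E := by
  borelize E
  set d := Module.finrank ℝ E with hd
  set μ := MeasureTheory.Measure.addHaar (G := E) with hμ
  set v := μ (Metric.ball (0 : E) 1) with hv
  have hv0 : v ≠ 0 := (Metric.measure_ball_pos μ 0 one_pos).ne'
  have hvt : v ≠ ⊤ := MeasureTheory.measure_ball_lt_top.ne
  have hball : ∀ i, μ (Metric.closedBall (c i) R) = ENNReal.ofReal (R ^ d) * v :=
    fun i => MeasureTheory.Measure.addHaar_closedBall μ (c i) hR.le
  have hsum : μ (⋃ i ∈ P, Metric.closedBall (c i) R)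
      = (P.card : ℝ≥0∞) * (ENNReal.ofReal (R ^ d) * v) := by
    rw [MeasureTheory.measure_biUnion_finset hdisj fun _ _ => measurableSet_closedBall]
    simp [hball, Finset.sum_const, nsmul_eq_mul]
  have hle : (P.card : ℝ≥0∞) * (ENNReal.ofReal (R ^ d) * v)
      ≤ ENNReal.ofReal ((4 * R) ^ d) * v := by
    rw [← hsum, ← MeasureTheory.Measure.addHaar_closedBall μ x (by linarith : (0:ℝ) ≤ 4 * R)]
    exact MeasureTheory.measure_mono (Set.iUnion₂_subset hsub)
  have hrw : ENNReal.ofReal ((4 * R) ^ d) = ((4 ^ d : ℕ) : ℝ≥0∞) * ENNReal.ofReal (R ^ d) := by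
    rw [mul_pow, ENNReal.ofReal_mul (by positivity), ← ENNReal.ofReal_natCast]
    norm_num
  rw [hrw, mul_assoc] at hle
  have hRv0 : ENNReal.ofReal (R ^ d) * v ≠ 0 := by
    refine mul_ne_zero ?_ hv0
    simpa [ENNReal.ofReal_eq_zero, not_le] using pow_pos hR _
  have hRvt : ENNReal.ofReal (R ^ d) * v ≠ ⊤ :=
    ENNReal.mul_ne_top ENNReal.ofReal_ne_top hvt
  have := (ENNReal.mul_le_mul_iff_left hRv0 hRvt).1 hle
  exact_mod_cast this

/-- Counting the level-`(n+1)` balls meeting a ball of radius `2ρc`. -/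
theorem counting_lemma {E : Type*} [NormedAddCommGroup E] [NormedSpace ℝ E]
    [FiniteDimensional ℝ E] (B : BallSystem E) (N₀ : ℕ)
    (hN : ∀ I, B.valid I → B.numChildren I ≤ N₀)
    (r : ℕ → ℝ) (hr : ∀ I, B.valid I → B.radius I = r I.length)
    (hdisj : ∀ I J, B.valid I → B.valid J → I.length = J.length → 1 ≤ I.length → I ≠ J →
      B.ball I ∩ B.ball J = ∅)
    (hr0 : ∀ n, 0 < r n) (xc : E) (ρc : ℝ) (hρc : 0 < ρc) (n : ℕ)
    (hn1 : n = 0 ∨ (1 ≤ n ∧ ρc < r n)) (S : Finset (List ℕ))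
    (hS : ∀ J ∈ S, B.valid J ∧ J.length = n + 1 ∧
      (B.ball J ∩ Metric.closedBall xc (2 * ρc)).Nonempty) :
    S.card ≤ (N₀ + 1) * 4 ^ Module.finrank ℝ E := by
  classical
  have h4 : 1 ≤ 4 ^ Module.finrank ℝ E := Nat.one_le_pow _ _ (by norm_num)
  -- decomposition of a valid word of length n+1
  have hdec : ∀ J ∈ S, ∃ i < B.numChildren (J.take n), J = J.take n ++ [i] := by
    intro J hJ
    obtain ⟨hv, hlen, -⟩ := hS J hJ
    refine ⟨J.get ⟨n, by omega⟩, by simpa using hv ⟨n, by omega⟩, ?_⟩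
    conv_lhs => rw [← List.take_append_drop n J]
    congr 1
    rw [List.drop_eq_getElem_cons (by omega)]
    simp [List.drop_of_length_le, hlen]
  rcases hn1 with rfl | hn
  · -- only the children of the root
    have hsub : S ⊆ (Finset.range (B.numChildren [])).image fun i => [i] := by
      intro J hJ
      obtain ⟨i, hi, hJeq⟩ := hdec J hJ
      have : J.take 0 = [] := List.take_zero
      rw [this] at hi hJeq
      exact Finset.mem_image.2 ⟨i, Finset.mem_range.2 hi, hJeq.symm⟩
    calc S.card ≤ _ := Finset.card_le_card hsub
      _ ≤ (Finset.range (B.numChildren [])).card := Finset.card_image_le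
      _ ≤ N₀ := by simpa using hN [] BallSystem.valid_nil
      _ ≤ (N₀ + 1) * 4 ^ Module.finrank ℝ E := by
          calc N₀ ≤ N₀ + 1 := Nat.le_succ _
            _ = (N₀+1) * 1 := (mul_one _).symm
            _ ≤ _ := Nat.mul_le_mul_left _ h4
  · obtain ⟨hn0, hn⟩ := hn
    -- fibers of the truncation map have at most N₀ elements
    have hfib : ∀ b ∈ S.image (fun J => J.take n),
        (S.filter fun J => J.take n = b).card ≤ N₀ := by
      intro b hb
      obtain ⟨J₀, hJ₀, rfl⟩ := Finset.mem_image.1 hb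
      have hbval : B.valid (J₀.take n) := BallSystem.valid_take (hS J₀ hJ₀).1 n
      have hsub : (S.filter fun J => J.take n = J₀.take n) ⊆
          (Finset.range N₀).image fun i => J₀.take n ++ [i] := by
        intro J hJ
        obtain ⟨hJS, hJtake⟩ := Finset.mem_filter.1 hJ
        obtain ⟨i, hi, hJeq⟩ := hdec J hJS
        rw [hJtake] at hi hJeq
        refine Finset.mem_image.2 ⟨i, Finset.mem_range.2 (lt_of_lt_of_le hi ?_), hJeq.symm⟩
        exact hN _ hbval
      calc _ ≤ _ := Finset.card_le_card hsub
        _ ≤ (Finset.range N₀).card := Finset.card_image_le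
        _ = N₀ := Finset.card_range _
    have hcard := Finset.card_le_mul_card_image S N₀ hfib
    -- parents are disjoint balls of radius r n inside a ball of radius 4 r n
    have hparent : ∀ P ∈ S.image (fun J => J.take n), B.valid P ∧ P.length = n ∧
        Metric.closedBall (B.center P) (r n) = B.ball P ∧
        Metric.closedBall (B.center P) (r n) ⊆ Metric.closedBall xc (4 * r n) := by
      intro P hP
      obtain ⟨J, hJS, rfl⟩ := Finset.mem_image.1 hP
      obtain ⟨hv, hlen, y, hy1, hy2⟩ := hS J hJS
      have hvP : B.valid (J.take n) := BallSystem.valid_take hv n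
      have hlenP : (J.take n).length = n := by simp [hlen]
      have hballP : Metric.closedBall (B.center (J.take n)) (r n) = B.ball (J.take n) := by
        rw [BallSystem.ball, hr _ hvP, hlenP]
      refine ⟨hvP, hlenP, hballP, ?_⟩
      intro w hw
      have hyP : y ∈ B.ball (J.take n) := BallSystem.ball_take_subset hv n hy1
      rw [← hballP, Metric.mem_closedBall] at hyP
      rw [Metric.mem_closedBall] at hw hy2 ⊢
      calc dist w xc ≤ dist w (B.center (J.take n)) + dist (B.center (J.take n)) y
            + dist y xc := dist_triangle4 _ _ _ _
        _ ≤ r n + r n + 2 * ρc := by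
            refine add_le_add (add_le_add hw ?_) hy2
            rwa [dist_comm]
        _ ≤ 4 * r n := by linarith
    have hQ : (S.image (fun J => J.take n)).card ≤ 4 ^ Module.finrank ℝ E := by
      refine card_le_of_disjoint_balls _ B.center (hr0 n) xc ?_ fun P hP => (hparent P hP).2.2.2
      intro P hP P' hP' hne
      obtain ⟨hvP, hlP, hbP, -⟩ := hparent P hP
      obtain ⟨hvP', hlP', hbP', -⟩ := hparent P' hP'
      rw [Function.onFun, hbP, hbP']
      rw [Set.disjoint_iff_inter_eq_empty]
      exact hdisj P P' hvP hvP' (hlP.trans hlP'.symm) (hlP ▸ hn0) hne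
    calc S.card ≤ N₀ * (S.image (fun J => J.take n)).card := hcard
      _ ≤ N₀ * 4 ^ Module.finrank ℝ E := Nat.mul_le_mul_left _ hQ
      _ ≤ _ := Nat.mul_le_mul_right _ (Nat.le_succ _)

theorem getLast?_ofFn_succ {γ : Type*} (m : ℕ) (f : Fin (m + 1) → γ) :
    (List.ofFn f).getLast? = some (f ⟨m, Nat.lt_succ_self m⟩) := by
  rw [List.ofFn_succ' f, List.concat_eq_append, List.getLast?_concat]
  rfl

end Aux

/-- The radius associated to an (optional) erased pair `(set, radius)`; `0` if unused. -/
def optRad {E : Type*} (p : Option (Set E × ℝ)) : ℝ := p.elim 0 Prod.snd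

/-- The region erased by one of Alice's moves: the union of the closed
`ρ_i`-neighborhoods `N(L_i, ρ_i)` of the chosen sets. -/
def erasedSet {E : Type*} [PseudoEMetricSpace E] (a : ℕ → Option (Set E × ℝ)) : Set E :=
  ⋃ i, (a i).elim ∅ fun p => Metric.cthickening p.2 p.1

/-- Legality of one of Alice's moves in the `(α, β, c, ρ, ℋ)`-potential game, when Bob
has just played a ball of radius `ρm`: each erased set is a closed neighborhood
`N(L, ρ')` with `L ∈ ℋ` and `ρ' > 0`; if `c > 0` the radii satisfy
`∑ ρ_i^c ≤ (α ρm)^c`, and if `c = 0` Alice erases at most one set, of radius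
`≤ α ρm`. (Alice may always pass, by choosing no set at all.) -/
def AliceLegal {E : Type*} (H : Set (Set E)) (α c ρm : ℝ)
    (a : ℕ → Option (Set E × ℝ)) : Prop :=
  (∀ i, ∀ p ∈ a i, p.1 ∈ H ∧ 0 < p.2) ∧
  (if 0 < c then (∑' i, optRad (a i) ^ c) ≤ (α * ρm) ^ c
   else (∀ i, i ≠ 0 → a i = none) ∧ optRad (a 0) ≤ α * ρm)

/-- `S` is an `(α, β, c, ρ₀, ℋ)`-winning set for the potential game: Alice has a
strategy `σ` (assigning to each history of Bob's balls a countable collection of pairs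
`(L_i, ρ_i)`, encoding the erased neighborhoods `N(L_i, ρ_i)`) such that, for every
play of Bob — a sequence of closed balls `B_m = B[x_m, ρ_m]` with `ρ₀ ≤ ρ 0`,
`B_{m+1} ⊆ B_m`, `ρ_{m+1} ≥ β ρ_m` and `ρ_m → 0` — all of Alice's responses are legal,
and any point `z` of `⋂_m B_m` (i.e. the outcome `x_∞`) avoiding all erased sets lies
in `S`. -/
def IsWinning {E : Type*} [NormedAddCommGroup E] (S : Set E) (H : Set (Set E))
    (α β c ρ₀ : ℝ) : Prop :=
  ∃ σ : List (E × ℝ) → ℕ → Option (Set E × ℝ),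
    ∀ (x : ℕ → E) (ρ : ℕ → ℝ),
      (∀ m, 0 < ρ m) →
      ρ₀ ≤ ρ 0 →
      (∀ m, Metric.closedBall (x (m+1)) (ρ (m+1)) ⊆ Metric.closedBall (x m) (ρ m)) →
      (∀ m, β * ρ m ≤ ρ (m+1)) →
      Filter.Tendsto ρ Filter.atTop (nhds 0) →
      (∀ m, AliceLegal H α c (ρ m) (σ (List.ofFn fun k : Fin (m+1) => (x k, ρ k)))) ∧
      ∀ z : E, (∀ m, z ∈ Metric.closedBall (x m) (ρ m)) →
        z ∉ ⋃ m, erasedSet (σ (List.ofFn fun k : Fin (m+1) => (x k, ρ k))) →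
        z ∈ S

/-- `ℋ_M`: the family of all subsets of `E` that are unions of at most `M` spheres. -/
def spheresFamily (E : Type*) [NormedAddCommGroup E] (M : ℕ) : Set (Set E) :=
  {A | ∃ s : Finset (E × ℝ), s.card ≤ M ∧ A = ⋃ p ∈ s, Metric.sphere p.1 p.2}


section Game
variable {E : Type*} [NormedAddCommGroup E]

theorem legal_single (H : Set (Set E)) (α ρm : ℝ) (o : Option (Set E × ℝ))
    (ho : ∀ p ∈ o, p.1 ∈ H ∧ 0 < p.2 ∧ p.2 ≤ α * ρm) (hnn : 0 ≤ α * ρm) :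
    AliceLegal H α 0 ρm (fun i => if i = 0 then o else none) := by
  constructor
  · intro i p hp
    by_cases hi : i = 0
    · simp only [hi, if_pos] at hp
      exact ⟨(ho p hp).1, (ho p hp).2.1⟩
    · simp [hi] at hp
  · rw [if_neg (lt_irrefl 0)]
    refine ⟨fun i hi => by simp [hi], ?_⟩
    show optRad (if 0 = 0 then o else none) ≤ α * ρm
    rw [if_pos rfl]
    cases o with
    | none => simpa [optRad] using hnn
    | some p => simpa [optRad] using (ho p rfl).2.2

theorem mem_erasedSet_of_zero {o : Option (Set E × ℝ)} {L : Set E} {δ : ℝ} {z : E}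
    (ho : o = some (L, δ)) (hz : z ∈ Metric.cthickening δ L) :
    z ∈ erasedSet (fun i => if i = 0 then o else none) := by
  refine Set.mem_iUnion.2 ⟨0, ?_⟩
  show z ∈ (if 0 = 0 then o else none).elim ∅ fun p => Metric.cthickening p.2 p.1
  rw [if_pos rfl, ho]
  exact hz

end Game

/-- Let `C ⊆ ℝ^d` be a compact set with a system of balls in which
every ball has at most `N₀` children, the level-`n` balls (`n ≥ 1`) are pairwise
disjoint and share the radius `r_n`, and `sup_n r_{n+1}/r_n < 1`. Then there is `M`
(depending only on `N₀`, the norm and `d`) such that, if `τ := τ(C, {S_I}) > 0`, then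
`S = C ∪ (ℝ^d \ S_∅)` is `(1/τ, β, 0, β·rad S_∅, ℋ_M)`-winning for every
`β ∈ [sup_n r_{n+1}/r_n, 1)`. -/
theorem winning_of_thickness {E : Type*} [NormedAddCommGroup E] [NormedSpace ℝ E]
    [FiniteDimensional ℝ E] (N₀ : ℕ) :
    ∃ M : ℕ, ∀ (C : Set E), IsCompact C → ∀ B : BallSystem E, B.IsSystemFor C →
      (∀ I, B.valid I → B.numChildren I ≤ N₀) →
      ∀ r : ℕ → ℝ,
        (∀ I, B.valid I → B.radius I = r I.length) →
        (∀ I J, B.valid I → B.valid J → I.length = J.length → 1 ≤ I.length → I ≠ J →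
          B.ball I ∩ B.ball J = ∅) →
        (⨆ n, r (n+1) / r n) < 1 →
        0 < B.thickness C →
        ∀ β : ℝ, (⨆ n, r (n+1) / r n) ≤ β → β < 1 →
          IsWinning (C ∪ (Set.univ \ B.ball [])) (spheresFamily E M)
            (1 / B.thickness C).toReal β 0 (β * B.radius []) := by
  classical
  refine ⟨(N₀ + 1) * 4 ^ Module.finrank ℝ E, ?_⟩
  intro C hCcomp B hsys hN r hr hdisj hsup hτpos β hβsup hβ1
  have hCne : C.Nonempty := BallSystem.nonempty_of_isSystemFor hsys
  have hCclosed : IsClosed C := hCcomp.isClosed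
  set M := (N₀ + 1) * 4 ^ Module.finrank ℝ E with hM
  set τ := B.thickness C with hτdef
  set α := (1 / τ).toReal with hαdef
  have hαnn : 0 ≤ α := ENNReal.toReal_nonneg
  -- trivial case: subsingleton space
  rcases subsingleton_or_nontrivial E with hsubE | hntE
  · refine ⟨fun _ _ => none, fun x ρ hρpos hρ0 hnest hβρ hρlim => ⟨fun m => ?_, fun z hz hzout => ?_⟩⟩
    · constructor
      · intro i p hp
        exact absurd hp (by simp)
      · rw [if_neg (lt_irrefl 0)]
        exact ⟨fun _ _ => rfl, by simpa [optRad] using mul_nonneg hαnn (hρpos m).le⟩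
    · obtain ⟨c0, hc0⟩ := hCne
      exact Or.inl ((Subsingleton.elim z c0) ▸ hc0)
  -- case: infinite thickness
  rcases eq_or_ne τ ⊤ with hτtop | hτtop
  · have hroot : ∀ z ∈ B.ball [], z ∈ C := by
      have h1 : ENNReal.ofReal (B.minChildRadius []) / ENNReal.ofReal (B.h C []) = ⊤ := by
        have h2 : B.thickness C = ⊤ := hτdef ▸ hτtop
        rw [BallSystem.thickness] at h2
        exact iInf_eq_top.1 h2 ⟨[], BallSystem.valid_nil⟩
      have h3 : ENNReal.ofReal (B.h C []) = 0 := by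
        rcases ENNReal.div_eq_top.1 h1 with ⟨-, hb⟩ | ⟨ha, -⟩
        · exact hb
        · exact absurd ha ENNReal.ofReal_ne_top
      have h4 : B.h C [] ≤ 0 := ENNReal.ofReal_eq_zero.1 h3
      intro z hz
      refine (hCclosed.mem_iff_infDist_zero hCne).2 (le_antisymm ?_ Metric.infDist_nonneg)
      exact (BallSystem.infDist_le_h C hz).trans h4
    refine ⟨fun _ _ => none, fun x ρ hρpos hρ0 hnest hβρ hρlim => ⟨fun m => ?_, fun z hz hzout => ?_⟩⟩
    · constructor
      · intro i p hp
        exact absurd hp (by simp)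
      · rw [if_neg (lt_irrefl 0)]
        exact ⟨fun _ _ => rfl, by simpa [optRad] using mul_nonneg hαnn (hρpos m).le⟩
    · by_cases hzroot : z ∈ B.ball []
      · exact Or.inl (hroot z hzroot)
      · exact Or.inr ⟨trivial, hzroot⟩
  -- finite positive thickness
  have hτ0 : τ ≠ 0 := hτpos.ne'
  have hαpos : 0 < α := by
    rw [hαdef]
    refine ENNReal.toReal_pos ?_ ?_
    · rw [one_div, Ne, ENNReal.inv_eq_zero]
      exact hτtop
    · rw [one_div, Ne, ENNReal.inv_eq_top]
      exact hτ0
  rcases le_or_gt 1 α with hα1 | hα1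
  -- case α ≥ 1 : erase Bob's whole ball, vacuous win
  · refine ⟨fun l i => if i = 0 then (l.getLast?.elim none fun p =>
        some (Metric.sphere p.1 0, p.2)) else none,
      fun x ρ hρpos hρ0 hnest hβρ hρlim => ?_⟩
    have heval : ∀ m : ℕ, (List.ofFn fun k : Fin (m + 1) => (x k, ρ k)).getLast?
        = some (x m, ρ m) := fun m => getLast?_ofFn_succ m _
    constructor
    · intro m
      have heq : (fun i => if i = 0 then
            ((List.ofFn fun k : Fin (m + 1) => (x k, ρ k)).getLast?.elim none fun p =>
              some (Metric.sphere p.1 0, p.2)) else none)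
          = fun i => if i = 0 then some (Metric.sphere (x m) 0, ρ m) else none := by
        funext i
        rw [heval m]
        rfl
      beta_reduce
      rw [heq]
      refine legal_single _ _ _ _ ?_ (mul_nonneg hαnn (hρpos m).le)
      intro p hp
      rw [Option.mem_def, Option.some.injEq] at hp
      subst hp
      refine ⟨⟨{(x m, 0)}, ?_, by simp⟩, hρpos m, ?_⟩
      · simp only [Finset.card_singleton, hM]
        calc 1 ≤ N₀ + 1 := by omega
          _ = (N₀ + 1) * 1 := (mul_one _).symm
          _ ≤ (N₀ + 1) * 4 ^ Module.finrank ℝ E :=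
              Nat.mul_le_mul_left _ (Nat.one_le_pow _ _ (by norm_num))
      · exact le_mul_of_one_le_left (hρpos m).le hα1
    · intro z hz hzout
      exfalso
      apply hzout
      refine Set.mem_iUnion.2 ⟨0, ?_⟩
      beta_reduce
      have heq : ((List.ofFn fun k : Fin (0 + 1) => (x k, ρ k)).getLast?.elim none fun p =>
          some (Metric.sphere p.1 0, p.2)) = some (Metric.sphere (x 0) 0, ρ 0) := by
        rw [heval 0]
        rfl
      refine mem_erasedSet_of_zero heq ?_
      rw [Metric.sphere_zero, Metric.cthickening_singleton _ (hρpos 0).le]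
      exact hz 0
  -- main case : 0 < α < 1
  · -- basic facts about the radii r n
    have hr0 : ∀ n, 0 < r n := by
      intro n
      have := B.radius_pos (List.replicate n 0)
      rwa [hr _ (B.valid_replicate n), List.length_replicate] at this
    have hrlim : Filter.Tendsto r Filter.atTop (nhds 0) := by
      have heq : (fun n => B.radius (List.replicate n 0)) = r :=
        funext fun n => by rw [hr _ (B.valid_replicate n), List.length_replicate]
      have := B.radius_replicate_tendsto
      rwa [heq] at this
    have hrmono : ∀ n, r (n + 1) ≤ r n := by
      intro n
      have hsub := B.ball_replicate_succ_subset n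
      rw [BallSystem.ball, BallSystem.ball, hr _ (B.valid_replicate (n+1)),
        hr _ (B.valid_replicate n), List.length_replicate, List.length_replicate] at hsub
      exact radius_le_of_closedBall_subset (hr0 (n+1)).le hsub
    have hrant : Antitone r := antitone_nat_of_succ_le hrmono
    have hbdd : BddAbove (Set.range fun n => r (n + 1) / r n) := by
      refine ⟨1, ?_⟩
      rintro _ ⟨n, rfl⟩
      exact div_le_one_of_le₀ (hrmono n) (hr0 n).le
    have hratio : ∀ n, r (n + 1) ≤ β * r n := by
      intro n
      have h1 : r (n + 1) / r n ≤ β := le_trans (le_ciSup hbdd n) hβsup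
      calc r (n+1) = (r (n+1) / r n) * r n := by
            rw [div_mul_eq_mul_div, mul_div_assoc, div_self (hr0 n).ne', mul_one]
        _ ≤ β * r n := mul_le_mul_of_nonneg_right h1 (hr0 n).le
    have hβpos : 0 < β :=
      lt_of_lt_of_le (div_pos (hr0 1) (hr0 0)) (le_trans (le_ciSup hbdd 0) hβsup)
    -- the h-bound coming from the thickness
    have hballbound : ∀ I, B.valid I → ∀ z ∈ B.ball I, infDist z C ≤ α * r (I.length + 1) := by
      intro I hI z hz
      have key := BallSystem.ofReal_h_mul_thickness_le (C := C) hI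
      rw [BallSystem.minChildRadius_eq hI hr] at key
      rw [← hτdef] at key
      have key2 : ENNReal.ofReal (B.h C I) ≤ ENNReal.ofReal (r (I.length + 1)) / τ :=
        (ENNReal.le_div_iff_mul_le (Or.inl hτ0) (Or.inl hτtop)).2 key
      have hfin : ENNReal.ofReal (r (I.length + 1)) / τ ≠ ⊤ := by
        rw [Ne, ENNReal.div_eq_top]
        push_neg
        exact ⟨fun _ => hτ0, fun h => absurd h ENNReal.ofReal_ne_top⟩
      have key3 := ENNReal.toReal_mono hfin key2
      rw [ENNReal.toReal_ofReal (BallSystem.h_nonneg C I), ENNReal.toReal_div,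
        ENNReal.toReal_ofReal (hr0 _).le] at key3
      have hα_eq : α = 1 / τ.toReal := by rw [hαdef, ENNReal.toReal_div, ENNReal.toReal_one]
      have hτR : 0 < τ.toReal := ENNReal.toReal_pos hτ0 hτtop
      calc infDist z C ≤ B.h C I := BallSystem.infDist_le_h C hz
        _ ≤ r (I.length + 1) / τ.toReal := key3
        _ = α * r (I.length + 1) := by rw [hα_eq]; field_simp
    -- the valid words of each length, as a finset
    set V : ℕ → Finset (List ℕ) := fun n => (BallSystem.validLevel_finite B n).toFinset with hV
    have hVmem : ∀ n J, J ∈ V n ↔ B.valid J ∧ J.length = n := by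
      intro n J
      rw [hV]
      exact Set.Finite.mem_toFinset _
    -- Alice's move
    set mv : E × ℝ → Option (Set E × ℝ) := fun q =>
      if hn : ∃ n, r (n + 1) ≤ q.2 then
        some (⋃ p ∈ ((V (Nat.find hn + 1)).filter fun J =>
            (B.ball J ∩ Metric.closedBall q.1 (2 * q.2)).Nonempty).image
            (fun J => (B.center J, B.radius J)), Metric.sphere p.1 p.2, α * q.2)
      else none with hmv
    refine ⟨fun l i => if i = 0 then (l.getLast?.elim none mv) else none,
      fun x ρ hρpos hρ0 hnest hβρ hρlim => ?_⟩
    have heval : ∀ m : ℕ, (List.ofFn fun k : Fin (m + 1) => (x k, ρ k)).getLast?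
        = some (x m, ρ m) := fun m => getLast?_ofFn_succ m _
    have hfind : ∀ m, ∃ n, r (n + 1) ≤ ρ m := by
      intro m
      obtain ⟨k, hk⟩ := (hrlim.eventually (gt_mem_nhds (hρpos m))).exists
      exact ⟨k, (hrmono k).trans hk.le⟩
    have hσeq : ∀ m : ℕ, (fun i => if i = 0 then
          ((List.ofFn fun k : Fin (m + 1) => (x k, ρ k)).getLast?.elim none mv) else none)
        = fun i => if i = 0 then mv (x m, ρ m) else none := by
      intro m
      funext i
      rw [heval m]
      rfl
    -- the move at turn m, unfolded
    have hmv_eq : ∀ m : ℕ, mv (x m, ρ m) =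
        some (⋃ p ∈ ((V (Nat.find (hfind m) + 1)).filter fun J =>
            (B.ball J ∩ Metric.closedBall (x m) (2 * ρ m)).Nonempty).image
            (fun J => (B.center J, B.radius J)), Metric.sphere p.1 p.2, α * ρ m) := by
      intro m
      rw [hmv]
      exact dif_pos (hfind m)
    -- the counting bound for each turn
    have hcount : ∀ m : ℕ, (((V (Nat.find (hfind m) + 1)).filter fun J =>
        (B.ball J ∩ Metric.closedBall (x m) (2 * ρ m)).Nonempty).image
        (fun J => (B.center J, B.radius J))).card ≤ M := by
      intro m
      set n := Nat.find (hfind m) with hn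
      have hcases : n = 0 ∨ (1 ≤ n ∧ ρ m < r n) := by
        rcases Nat.eq_zero_or_pos n with h0 | hpos
        · exact Or.inl h0
        · refine Or.inr ⟨hpos, ?_⟩
          have := Nat.find_min (hfind m) (show n - 1 < n by omega)
          rw [show n - 1 + 1 = n by omega] at this
          exact not_le.1 this
      calc _ ≤ ((V (n + 1)).filter fun J =>
            (B.ball J ∩ Metric.closedBall (x m) (2 * ρ m)).Nonempty).card :=
          Finset.card_image_le
        _ ≤ M := by
          rw [hM]
          refine counting_lemma B N₀ hN r hr hdisj hr0 (x m) (ρ m) (hρpos m) n hcases _ ?_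
          intro J hJ
          obtain ⟨hJV, hJne⟩ := Finset.mem_filter.1 hJ
          obtain ⟨hJv, hJlen⟩ := (hVmem _ J).1 hJV
          exact ⟨hJv, hJlen, hJne⟩
    constructor
    · -- legality
      intro m
      beta_reduce
      rw [hσeq m]
      refine legal_single _ _ _ _ ?_ (mul_nonneg hαnn (hρpos m).le)
      intro p hp
      rw [hmv_eq m, Option.mem_def, Option.some.injEq] at hp
      subst hp
      exact ⟨⟨_, hcount m, rfl⟩, mul_pos hαpos (hρpos m), le_refl _⟩
    · -- the winning condition
      intro z hz hzout
      by_cases hzroot : z ∈ B.ball []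
      swap
      · exact Or.inr ⟨trivial, hzroot⟩
      left
      by_contra hzC
      have hεpos : 0 < infDist z C := by
        rcases lt_or_eq_of_le (Metric.infDist_nonneg (x := z) (s := C)) with h | h
        · exact h
        · exact absurd ((hCclosed.mem_iff_infDist_zero hCne).2 h.symm) hzC
      -- z cannot be in balls of every level
      have hnotall : ¬ ∀ n, ∃ I, B.valid I ∧ I.length = n ∧ z ∈ B.ball I := by
        intro hall
        have hbnd : ∀ n, infDist z C ≤ α * r (n + 1) := by
          intro n
          obtain ⟨I, hv, hlen, hzI⟩ := hall n
          have := hballbound I hv z hzI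
          rwa [hlen] at this
        have hlim0 : Filter.Tendsto (fun n => α * r (n + 1)) Filter.atTop (nhds 0) := by
          have := (hrlim.comp (Filter.tendsto_add_atTop_nat 1)).const_mul α
          simpa using this
        have : infDist z C ≤ 0 := ge_of_tendsto hlim0 (Filter.Eventually.of_forall hbnd)
        linarith
      have hex : ∃ n, ¬ ∃ I, B.valid I ∧ I.length = n ∧ z ∈ B.ball I := not_forall.1 hnotall
      set n₁ := Nat.find hex with hn₁
      have hn₁spec : ¬ ∃ I, B.valid I ∧ I.length = n₁ ∧ z ∈ B.ball I := Nat.find_spec hex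
      have hn₁pos : n₁ ≠ 0 := by
        intro h0
        exact hn₁spec (h0 ▸ ⟨[], BallSystem.valid_nil, rfl, hzroot⟩)
      obtain ⟨n₀, hn₀⟩ : ∃ n₀, n₁ = n₀ + 1 := ⟨n₁ - 1, by omega⟩
      have hPn₀ : ∃ I, B.valid I ∧ I.length = n₀ ∧ z ∈ B.ball I := by
        have := Nat.find_min hex (show n₀ < n₁ by omega)
        rwa [not_not] at this
      obtain ⟨I, hIv, hIlen, hzI⟩ := hPn₀
      have hεle : infDist z C ≤ α * r (n₀ + 1) := by
        have := hballbound I hIv z hzI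
        rwa [hIlen] at this
      -- nearest point of C, and the level-(n₀+1) ball containing it
      obtain ⟨p, hpC, hεdist⟩ := hCcomp.exists_infDist_eq_dist hCne z
      have hpUnion : p ∈ ⋃ J ∈ {J : List ℕ | B.valid J ∧ J.length = n₁}, B.ball J := by
        have h1 : p ∈ ⋂ n : ℕ, ⋃ J ∈ {J : List ℕ | B.valid J ∧ J.length = n}, B.ball J := by
          rwa [← hsys]
        exact Set.mem_iInter.1 h1 n₁
      rw [Set.mem_iUnion₂] at hpUnion
      obtain ⟨J, hJ, hpJ⟩ := hpUnion
      have hzJ : z ∉ B.ball J := fun hzJ' => hn₁spec ⟨J, hJ.1, hJ.2, hzJ'⟩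
      rw [BallSystem.ball] at hzJ hpJ
      obtain ⟨w, hwsph, hwz⟩ := exists_sphere_dist_le hzJ hpJ
      have hwz' : dist z w ≤ infDist z C := by rw [hεdist]; exact hwz
      -- the turn at which level n₀ is handled
      have hexm : ∃ m, ρ m < r n₀ := (hρlim.eventually (gt_mem_nhds (hr0 n₀))).exists
      set m₀ := Nat.find hexm with hm₀def
      have hm₀ : ρ m₀ < r n₀ := Nat.find_spec hexm
      have hm₀le : r (n₀ + 1) ≤ ρ m₀ := by
        rcases Nat.eq_zero_or_pos m₀ with h0 | hpos
        · rw [h0]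
          have hr00 : B.radius [] = r 0 := by
            have := hr [] BallSystem.valid_nil
            simpa using this
          calc r (n₀ + 1) ≤ r 1 := hrant (by omega)
            _ ≤ β * r 0 := hratio 0
            _ = β * B.radius [] := by rw [hr00]
            _ ≤ ρ 0 := hρ0
        · obtain ⟨k, hk⟩ : ∃ k, m₀ = k + 1 := ⟨m₀ - 1, by omega⟩
          have hklt : ¬ ρ k < r n₀ := Nat.find_min hexm (by omega)
          calc r (n₀ + 1) ≤ β * r n₀ := hratio n₀
            _ ≤ β * ρ k := mul_le_mul_of_nonneg_left (not_lt.1 hklt) hβpos.le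
            _ ≤ ρ (k + 1) := hβρ k
            _ = ρ m₀ := by rw [hk]
      have hfm : Nat.find (hfind m₀) = n₀ := by
        rw [Nat.find_eq_iff]
        refine ⟨hm₀le, fun k hk => not_le.2 (lt_of_lt_of_le hm₀ (hrant (by omega)))⟩
      -- z is erased at turn m₀
      exfalso
      apply hzout
      refine Set.mem_iUnion.2 ⟨m₀, ?_⟩
      beta_reduce
      rw [hσeq m₀]
      refine mem_erasedSet_of_zero (hmv_eq m₀) ?_
      -- z is within α * ρ m₀ of the sphere of J
      have hJfilter : J ∈ (V (Nat.find (hfind m₀) + 1)).filter fun J' =>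
          (B.ball J' ∩ Metric.closedBall (x m₀) (2 * ρ m₀)).Nonempty := by
        rw [hfm]
        refine Finset.mem_filter.2 ⟨(hVmem _ J).2 ⟨hJ.1, by rw [hJ.2, hn₀]⟩, ⟨w, ?_, ?_⟩⟩
        · rw [BallSystem.ball]
          exact Metric.sphere_subset_closedBall hwsph
        · rw [Metric.mem_closedBall]
          calc dist w (x m₀) ≤ dist w z + dist z (x m₀) := dist_triangle _ _ _
            _ ≤ infDist z C + ρ m₀ := by
                refine add_le_add (by rwa [dist_comm]) ?_
                have := hz m₀
                rwa [Metric.mem_closedBall] at this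
            _ ≤ α * r (n₀ + 1) + ρ m₀ := by linarith
            _ ≤ 1 * ρ m₀ + ρ m₀ := by
                refine add_le_add ?_ (le_refl _)
                calc α * r (n₀ + 1) ≤ α * ρ m₀ :=
                      mul_le_mul_of_nonneg_left hm₀le hαnn
                  _ ≤ 1 * ρ m₀ := mul_le_mul_of_nonneg_right hα1.le (hρpos m₀).le
            _ = 2 * ρ m₀ := by ring
      refine Metric.mem_cthickening_of_dist_le z w _ _ ?_ ?_
      · exact Set.mem_iUnion₂.2 ⟨(B.center J, B.radius J),
          Finset.mem_image.2 ⟨J, hJfilter, rfl⟩, hwsph⟩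
      · calc dist z w ≤ infDist z C := hwz'
          _ ≤ α * r (n₀ + 1) := hεle
          _ ≤ α * ρ m₀ := mul_le_mul_of_nonneg_left hm₀le hαnn
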